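/- In the Shrikhande graph, every vertex has exactly 6 neighbors, and for every vertex v the subgraph induced on the neighborhood of v is 2-regular (so it has exactly 6 edges = peripheral edges), connected, and isomorphic to the cycle C_6. Consequently, since in the 4×4 rook's graph the induced neighborhood of every vertex is a disjoint union of two triangles, the Shrikhande graph and the 4×4 rook's graph are not isomorphic. -/

import Mathlib

/-!
STATEMENT 16: In the Shrikhande graph every vertex has exactly 6 neighbors, and the
subgraph induced on each neighborhood is 2-regular with exactly 6 (peripheral) edges,
connected, and isomorphic to the 6-cycle. Since in the 4×4 rook's graph each induced
neighborhood is a disjoint union of two triangles, the two graphs are not isomorphic.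
-/

namespace KHopStmt16

/-- The connection set of the Shrikhande graph. -/
def shrikhandeSet : Finset (ZMod 4 × ZMod 4) :=
  {(1, 0), (3, 0), (0, 1), (0, 3), (1, 1), (3, 3)}

/-- The Shrikhande graph: the Cayley graph on `(ℤ/4ℤ) × (ℤ/4ℤ)` with connection set
`{(1,0), (3,0), (0,1), (0,3), (1,1), (3,3)}`. -/
def Shrikhande : SimpleGraph (ZMod 4 × ZMod 4) :=
  SimpleGraph.fromRel fun a b => a - b ∈ shrikhandeSet

/-- The 4×4 rook's graph on `(ℤ/4ℤ) × (ℤ/4ℤ)`: two distinct vertices are adjacent iff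
they agree in the first coordinate or agree in the second coordinate. -/
def RookGraph : SimpleGraph (ZMod 4 × ZMod 4) :=
  SimpleGraph.fromRel fun a b => a.1 = b.1 ∨ a.2 = b.2

instance : DecidableRel Shrikhande.Adj := fun a b =>
  decidable_of_iff _
    (SimpleGraph.fromRel_adj
      (fun a b : ZMod 4 × ZMod 4 => a - b ∈ shrikhandeSet) a b).symm

instance : DecidableRel RookGraph.Adj := fun a b =>
  decidable_of_iff _
    (SimpleGraph.fromRel_adj
      (fun a b : ZMod 4 × ZMod 4 => a.1 = b.1 ∨ a.2 = b.2) a b).symm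

instance (v : ZMod 4 × ZMod 4) : DecidablePred (· ∈ Shrikhande.neighborSet v) :=
  fun u => inferInstanceAs (Decidable (Shrikhande.Adj v u))

instance (v : ZMod 4 × ZMod 4) : DecidablePred (· ∈ RookGraph.neighborSet v) :=
  fun u => inferInstanceAs (Decidable (RookGraph.Adj v u))

/-- The disjoint union of two triangles, as a graph on `Fin 6`. -/
def twoTriangles : SimpleGraph (Fin 6) :=
  SimpleGraph.fromRel fun i j => i.val / 3 = j.val / 3

/-- The number of peripheral edges of the 1-hop neighborhood of `v`: edges of `G` with
both endpoints adjacent to `v`. -/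
noncomputable def periEdgeCount {V : Type*} [Fintype V] (G : SimpleGraph V) (v : V) :
    ℕ := by
  classical
  exact (G.edgeFinset.filter fun e => ∀ x ∈ e, x ∈ G.neighborSet v).card


section Aux

open SimpleGraph

instance : DecidableRel twoTriangles.Adj := fun a b =>
  decidable_of_iff _
    (SimpleGraph.fromRel_adj
      (fun i j : Fin 6 => i.val / 3 = j.val / 3) a b).symm

lemma shr_translate (a x y : ZMod 4 × ZMod 4) :
    Shrikhande.Adj (x + a) (y + a) ↔ Shrikhande.Adj x y := by
  simp only [Shrikhande, SimpleGraph.fromRel_adj, add_sub_add_right_eq_sub, ne_eq,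
    add_left_inj]

lemma rook_translate (a x y : ZMod 4 × ZMod 4) :
    RookGraph.Adj (x + a) (y + a) ↔ RookGraph.Adj x y := by
  simp only [RookGraph, SimpleGraph.fromRel_adj, ne_eq, add_left_inj, Prod.fst_add,
    Prod.snd_add]

/-- Translation isomorphism for Shrikhande neighborhoods. -/
def transIso (a : ZMod 4 × ZMod 4) :
    (Shrikhande.induce (Shrikhande.neighborSet 0)) ≃g
      (Shrikhande.induce (Shrikhande.neighborSet a)) where
  toEquiv := Equiv.subtypeEquiv (Equiv.addRight a) (fun u => by
    simp only [SimpleGraph.mem_neighborSet, Equiv.coe_addRight]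
    rw [← shr_translate a 0 u, zero_add])
  map_rel_iff' := by
    intro u w
    exact shr_translate a u w

def baseFun : Fin 6 → {u // u ∈ Shrikhande.neighborSet 0}
  | 0 => ⟨(1, 0), by decide⟩
  | 1 => ⟨(1, 1), by decide⟩
  | 2 => ⟨(0, 1), by decide⟩
  | 3 => ⟨(3, 0), by decide⟩
  | 4 => ⟨(3, 3), by decide⟩
  | 5 => ⟨(0, 3), by decide⟩

def baseInv (u : {u // u ∈ Shrikhande.neighborSet 0}) : Fin 6 :=
  if u.1 = (1, 0) then 0 else if u.1 = (1, 1) then 1 else if u.1 = (0, 1) then 2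
  else if u.1 = (3, 0) then 3 else if u.1 = (3, 3) then 4 else 5

def baseIso : (SimpleGraph.cycleGraph 6) ≃g
    (Shrikhande.induce (Shrikhande.neighborSet 0)) where
  toFun := baseFun
  invFun := baseInv
  left_inv := by decide
  right_inv := by decide
  map_rel_iff' := by decide

def nbhdIso (v : ZMod 4 × ZMod 4) :
    (Shrikhande.induce (Shrikhande.neighborSet v)) ≃g SimpleGraph.cycleGraph 6 :=
  (baseIso.trans (transIso v)).symm

/-- Translation isomorphism for rook neighborhoods. -/
def rookTransIso (a : ZMod 4 × ZMod 4) :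
    (RookGraph.induce (RookGraph.neighborSet 0)) ≃g
      (RookGraph.induce (RookGraph.neighborSet a)) where
  toEquiv := Equiv.subtypeEquiv (Equiv.addRight a) (fun u => by
    simp only [SimpleGraph.mem_neighborSet, Equiv.coe_addRight]
    rw [← rook_translate a 0 u, zero_add])
  map_rel_iff' := by
    intro u w
    exact rook_translate a u w

def rookBaseFun : Fin 6 → {u // u ∈ RookGraph.neighborSet 0}
  | 0 => ⟨(0, 1), by decide⟩
  | 1 => ⟨(0, 2), by decide⟩
  | 2 => ⟨(0, 3), by decide⟩
  | 3 => ⟨(1, 0), by decide⟩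
  | 4 => ⟨(2, 0), by decide⟩
  | 5 => ⟨(3, 0), by decide⟩

def rookBaseInv (u : {u // u ∈ RookGraph.neighborSet 0}) : Fin 6 :=
  if u.1 = (0, 1) then 0 else if u.1 = (0, 2) then 1 else if u.1 = (0, 3) then 2
  else if u.1 = (1, 0) then 3 else if u.1 = (2, 0) then 4 else 5

def rookBaseIso : twoTriangles ≃g (RookGraph.induce (RookGraph.neighborSet 0)) where
  toFun := rookBaseFun
  invFun := rookBaseInv
  left_inv := by decide
  right_inv := by decide
  map_rel_iff' := by decide

def rookNbhdIso (v : ZMod 4 × ZMod 4) :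
    (RookGraph.induce (RookGraph.neighborSet v)) ≃g twoTriangles :=
  (rookBaseIso.trans (rookTransIso v)).symm

/-- An isomorphism of graphs restricts to neighborhoods. -/
def restrictIso {V W : Type*} {G : SimpleGraph V} {H : SimpleGraph W} (φ : G ≃g H)
    (v : V) : (G.induce (G.neighborSet v)) ≃g (H.induce (H.neighborSet (φ v))) where
  toEquiv := Equiv.subtypeEquiv φ.toEquiv (fun u => by
    simp only [SimpleGraph.mem_neighborSet]
    exact φ.map_adj_iff.symm)
  map_rel_iff' := by
    intro u w
    exact φ.map_rel_iff

lemma cycle6_cliqueFree : (SimpleGraph.cycleGraph 6).CliqueFree 3 := by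
  intro t ht
  revert ht
  revert t
  decide

lemma twoTriangles_clique : twoTriangles.IsNClique 3 {0, 1, 2} := by decide

end Aux

/-- The Shrikhande graph is 6-regular; for every vertex `v` the
subgraph induced on the neighborhood of `v` is 2-regular, has exactly 6 peripheral
edges, is connected, and is isomorphic to the cycle `C₆`. Since every induced
neighborhood in the 4×4 rook's graph is a disjoint union of two triangles, the
Shrikhande graph and the rook's graph are not isomorphic. -/
theorem shrikhande_neighborhoods_are_hexagons :
    Shrikhande.IsRegularOfDegree 6 ∧
    (∀ v : ZMod 4 × ZMod 4,
      (Shrikhande.induce (Shrikhande.neighborSet v)).IsRegularOfDegree 2 ∧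
      periEdgeCount Shrikhande v = 6 ∧
      (Shrikhande.induce (Shrikhande.neighborSet v)).Connected ∧
      Nonempty ((Shrikhande.induce (Shrikhande.neighborSet v)) ≃g
        SimpleGraph.cycleGraph 6)) ∧
    (∀ v : ZMod 4 × ZMod 4,
      Nonempty ((RookGraph.induce (RookGraph.neighborSet v)) ≃g twoTriangles)) ∧
    IsEmpty (Shrikhande ≃g RookGraph) := by
  refine ⟨?_, fun v => ⟨?_, ?_, ?_, ⟨nbhdIso v⟩⟩, fun v => ⟨rookNbhdIso v⟩, ?_⟩
  · unfold SimpleGraph.IsRegularOfDegree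
    decide
  · revert v
    unfold SimpleGraph.IsRegularOfDegree
    decide
  · have key : ∀ v : ZMod 4 × ZMod 4, (Finset.univ.filter fun e : Sym2 (ZMod 4 × ZMod 4) =>
        e ∈ Shrikhande.edgeSet ∧ ∀ x ∈ e, x ∈ Shrikhande.neighborSet v).card = 6 := by decide
    unfold periEdgeCount
    rw [Finset.filter_congr_decidable, ← key v]
    congr 1
    ext e
    simp [SimpleGraph.mem_edgeFinset, and_comm]
  · exact (nbhdIso v).connected_iff.mpr SimpleGraph.cycleGraph_connected
  · refine ⟨fun φ => ?_⟩
    have iso : SimpleGraph.cycleGraph 6 ≃g twoTriangles :=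
      ((nbhdIso 0).symm.trans (restrictIso φ 0)).trans (rookNbhdIso (φ 0))
    exact twoTriangles_clique.not_cliqueFree
      (cycle6_cliqueFree.comap ⟨iso.symm.toEmbedding.toCopy⟩)

end KHopStmt16
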